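/- Let P be a bi-stochastic operator on L²([0,1], λ). Then there exists a sequence (T_n) of invertible Lebesgue-measure-preserving transformations of [0,1] whose Koopman operators converge to P in the weak operator topology: ⟨f ∘ T_n, g⟩ → ⟨P f, g⟩ for all f, g ∈ L²[0,1]. -/

import Mathlib

open MeasureTheory Filter Topology
open scoped RealInnerProductSpace

/-- Lebesgue measure on `[0,1]`. -/
noncomputable abbrev μ01 : Measure ℝ := volume.restrict (Set.Icc (0 : ℝ) 1)

/-- The indicator function of the dyadic interval `[j/2ⁿ, (j+1)/2ⁿ]` as an element of
`L²([0,1])`. -/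
noncomputable def dyadInd (n : ℕ) (j : Fin (2 ^ n)) : Lp ℝ 2 μ01 :=
  indicatorConstLp 2 measurableSet_Icc
    (by
      refine ne_of_lt (lt_of_le_of_lt (Measure.restrict_apply_le _ _) ?_)
      rw [Real.volume_Icc]; exact ENNReal.ofReal_lt_top)
    (1 : ℝ) (s := Set.Icc ((j : ℝ) / 2 ^ n) (((j : ℝ) + 1) / 2 ^ n))

/-- The constant function `𝟙` on `[0,1]` as an element of `L²([0,1])`. -/
noncomputable def oneL2 : Lp ℝ 2 μ01 :=
  indicatorConstLp 2 measurableSet_Icc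
    (by
      refine ne_of_lt (lt_of_le_of_lt (Measure.restrict_apply_le _ _) ?_)
      rw [Real.volume_Icc]; exact ENNReal.ofReal_lt_top)
    (1 : ℝ) (s := Set.Icc (0 : ℝ) 1)

open Set

instance : IsProbabilityMeasure μ01 :=
  ⟨by simp [Measure.restrict_apply_univ, Real.volume_Icc]⟩

/-- union of consecutive Ico's of a monotone sequence -/
lemma iUnion_Ico_monotone (c : ℕ → ℝ) (hc : Monotone c) (K : ℕ) :
    ⋃ i ∈ Finset.range K, Ico (c i) (c (i + 1)) = Ico (c 0) (c K) := by
  induction K with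
  | zero => simp
  | succ K ih =>
      rw [Finset.range_add_one, Finset.set_biUnion_insert, ih, Set.union_comm,
        Set.Ico_union_Ico_eq_Ico (hc (Nat.zero_le K)) (hc (Nat.le_succ K))]

lemma disjoint_Ico_monotone (c : ℕ → ℝ) (hc : Monotone c) {i j : ℕ} (hij : i ≠ j) :
    Disjoint (Ico (c i) (c (i + 1))) (Ico (c j) (c (j + 1))) := by
  wlog h : i < j generalizing i j
  · exact (this hij.symm (by omega)).symm
  exact (Set.Ico_disjoint_Ico_same (a := c i) (b := c j) (c := c (j + 1))).mono
    (Set.Ico_subset_Ico_right (hc (show i + 1 ≤ j by omega))) subset_rfl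

lemma sum_indicator_Ico (c : ℕ → ℝ) (hc : Monotone c) (K : ℕ) (x : ℝ) :
    ∑ i ∈ Finset.range K, (Ico (c i) (c (i + 1))).indicator (fun _ => (1:ℝ)) x
      = (Ico (c 0) (c K)).indicator (fun _ => (1:ℝ)) x := by
  induction K with
  | zero => simp
  | succ K ih =>
      rw [Finset.sum_range_succ, ih,
        ← Set.Ico_union_Ico_eq_Ico (hc (Nat.zero_le K)) (hc (Nat.le_succ K)),
        Set.indicator_union_of_disjoint Set.Ico_disjoint_Ico_same (fun _ => (1:ℝ))]

section Exchange

variable {ι : Type*} [Fintype ι]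

/-- Piecewise translation map: translate the block `B i` by `v i`. -/
noncomputable def exchT (v : ι → ℝ) (B : ι → Set ℝ) (x : ℝ) : ℝ :=
  x + ∑ i, (B i).indicator (fun _ => v i) x

lemma exchT_of_mem {v : ι → ℝ} {B : ι → Set ℝ}
    (hd : Pairwise (Function.onFun Disjoint B)) {i : ι} {x : ℝ} (hx : x ∈ B i) :
    exchT v B x = x + v i := by
  unfold exchT
  congr 1
  rw [Finset.sum_eq_single i]
  · simp [hx]
  · intro j _ hj
    exact Set.indicator_of_notMem (fun hxj => Set.disjoint_left.mp (hd hj) hxj hx) _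
  · intro h; exact absurd (Finset.mem_univ i) h

lemma exchT_of_not_mem {v : ι → ℝ} {B : ι → Set ℝ} {x : ℝ} (hx : x ∉ ⋃ i, B i) :
    exchT v B x = x := by
  unfold exchT
  have : ∀ i, (B i).indicator (fun _ => v i) x = 0 := fun i =>
    Set.indicator_of_notMem (fun h => hx (Set.mem_iUnion.mpr ⟨i, h⟩)) _
  simp [this]

lemma exchT_measurable (v : ι → ℝ) {B : ι → Set ℝ} (hB : ∀ i, MeasurableSet (B i)) :
    Measurable (exchT v B) :=
  measurable_id.add (Finset.measurable_sum _ fun i _ =>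
    (measurable_const.indicator (hB i)))

variable (a b ℓ : ι → ℝ)

lemma exchT_mem_target {a b ℓ : ι → ℝ}
    (hd : Pairwise (Function.onFun Disjoint fun i => Ico (a i) (a i + ℓ i)))
    {i : ι} {x : ℝ} (hx : x ∈ Ico (a i) (a i + ℓ i)) :
    exchT (fun i => b i - a i) (fun i => Ico (a i) (a i + ℓ i)) x
      ∈ Ico (b i) (b i + ℓ i) := by
  rw [exchT_of_mem hd hx]
  obtain ⟨h1, h2⟩ := hx
  constructor <;> [linarith; linarith]

lemma exchT_inverse {a b ℓ : ι → ℝ}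
    (hd : Pairwise (Function.onFun Disjoint fun i => Ico (a i) (a i + ℓ i)))
    (hU : ⋃ i, Ico (a i) (a i + ℓ i) = Ico (0:ℝ) 1)
    (hd' : Pairwise (Function.onFun Disjoint fun i => Ico (b i) (b i + ℓ i)))
    (hU' : ⋃ i, Ico (b i) (b i + ℓ i) = Ico (0:ℝ) 1) (x : ℝ) :
    exchT (fun i => a i - b i) (fun i => Ico (b i) (b i + ℓ i))
      (exchT (fun i => b i - a i) (fun i => Ico (a i) (a i + ℓ i)) x) = x := by
  by_cases hx : x ∈ ⋃ i, Ico (a i) (a i + ℓ i)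
  · obtain ⟨i, hi⟩ := Set.mem_iUnion.mp hx
    rw [exchT_of_mem hd hi, exchT_of_mem hd' (by
      have := exchT_mem_target (b := b) hd hi
      rwa [exchT_of_mem hd hi] at this)]
    ring
  · rw [exchT_of_not_mem hx, exchT_of_not_mem (by rwa [hU', ← hU])]

lemma exchT_measurePreserving {a b ℓ : ι → ℝ}
    (hd : Pairwise (Function.onFun Disjoint fun i => Ico (a i) (a i + ℓ i)))
    (hU : ⋃ i, Ico (a i) (a i + ℓ i) = Ico (0:ℝ) 1)
    (hd' : Pairwise (Function.onFun Disjoint fun i => Ico (b i) (b i + ℓ i)))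
    (hU' : ⋃ i, Ico (b i) (b i + ℓ i) = Ico (0:ℝ) 1) :
    MeasurePreserving (exchT (fun i => b i - a i) (fun i => Ico (a i) (a i + ℓ i)))
      μ01 μ01 := by
  set T := exchT (fun i => b i - a i) (fun i => Ico (a i) (a i + ℓ i)) with hT
  have hTm : Measurable T := exchT_measurable _ (fun i => measurableSet_Ico)
  refine ⟨hTm, ?_⟩
  ext s hs
  rw [Measure.map_apply hTm hs, Measure.restrict_apply (hTm hs),
    Measure.restrict_apply hs]
  have hIccIco : ∀ A : Set ℝ, volume (A ∩ Icc (0:ℝ) 1) = volume (A ∩ Ico (0:ℝ) 1) := by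
    intro A
    exact measure_congr (Filter.EventuallyEq.refl _ _ |>.inter Ico_ae_eq_Icc.symm)
  rw [hIccIco, hIccIco]
  have key : ∀ i, T ⁻¹' s ∩ Ico (a i) (a i + ℓ i)
      = (fun x => x + (b i - a i)) ⁻¹' (s ∩ Ico (b i) (b i + ℓ i)) := by
    intro i
    ext x
    simp only [Set.mem_inter_iff, Set.mem_preimage, Set.mem_Ico]
    constructor
    · rintro ⟨hxs, hxB⟩
      have := exchT_of_mem (v := fun i => b i - a i) hd hxB
      rw [← hT] at this
      refine ⟨by rwa [this] at hxs, by obtain ⟨h1, h2⟩ := hxB; constructor <;> linarith⟩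
    · rintro ⟨hxs, hxB⟩
      have hxA : x ∈ Ico (a i) (a i + ℓ i) := by
        obtain ⟨h1, h2⟩ := hxB; constructor <;> linarith
      have := exchT_of_mem (v := fun i => b i - a i) hd hxA
      rw [← hT] at this
      exact ⟨by rwa [this], hxA⟩
  calc volume (T ⁻¹' s ∩ Ico (0:ℝ) 1)
      = volume (⋃ i, T ⁻¹' s ∩ Ico (a i) (a i + ℓ i)) := by
        rw [← Set.inter_iUnion, hU]
    _ = ∑' i, volume (T ⁻¹' s ∩ Ico (a i) (a i + ℓ i)) := by
        refine measure_iUnion ?_ (fun i => (hTm hs).inter measurableSet_Ico)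
        exact hd.mono fun i j h => h.mono Set.inter_subset_right Set.inter_subset_right
    _ = ∑' i, volume (s ∩ Ico (b i) (b i + ℓ i)) := by
        refine tsum_congr fun i => ?_
        rw [key i, measure_preimage_add_right]
    _ = volume (⋃ i, s ∩ Ico (b i) (b i + ℓ i)) := by
        refine (measure_iUnion ?_ (fun i => hs.inter measurableSet_Ico)).symm
        exact hd'.mono fun i j h => h.mono Set.inter_subset_right Set.inter_subset_right
    _ = volume (s ∩ Ico (0:ℝ) 1) := by rw [← Set.inter_iUnion, hU']

end Exchange

section Blocks

variable (N : ℕ) (w : ℕ → ℕ → ℝ)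

/-- cumulative sums within column `j`, offset by `j/N`. -/
noncomputable def cumB (j t : ℕ) : ℝ :=
  (j : ℝ) / N + ∑ i ∈ Finset.range (min t N), w i j

lemma cumB_mono (hw : ∀ i j, 0 ≤ w i j) (j : ℕ) : Monotone (cumB N w j) := by
  intro s t hst
  unfold cumB
  apply add_le_add le_rfl
  apply Finset.sum_le_sum_of_subset_of_nonneg
  · exact Finset.range_subset_range.mpr (by omega)
  · exact fun i _ _ => hw i j

lemma cumB_succ {i : ℕ} (hi : i < N) (j : ℕ) :
    cumB N w j (i + 1) = cumB N w j i + w i j := by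
  unfold cumB
  rw [min_eq_left (by omega), min_eq_left (by omega), Finset.sum_range_succ]
  ring

lemma cumB_zero (j : ℕ) : cumB N w j 0 = (j : ℝ) / N := by simp [cumB]

lemma cumB_top (j : ℕ) (hrow : ∑ i ∈ Finset.range N, w i j = 1 / N) :
    cumB N w j N = ((j : ℝ) + 1) / N := by
  unfold cumB
  rw [min_self, hrow]
  ring

lemma iUnion_fin_eq_range {g : ℕ → Set ℝ} {N : ℕ} :
    ⋃ i : Fin N, g i = ⋃ t ∈ Finset.range N, g t := by
  ext x
  simp [Fin.exists_iff, Finset.mem_range]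

lemma div_mono (hN : 0 < N) : Monotone (fun t : ℕ => (t : ℝ) / N) := by
  intro s t hst
  have h : (0:ℝ) < N := by exact_mod_cast hN
  exact (div_le_div_iff_of_pos_right h).mpr (by exact_mod_cast hst)

/-- each block lies in its column interval -/
lemma block_subset_col (hN : 0 < N) (hw : ∀ i j, 0 ≤ w i j)
    (hrow : ∀ j, j < N → ∑ i ∈ Finset.range N, w i j = 1 / N)
    {i j : ℕ} (hi : i < N) (hj : j < N) :
    Ico (cumB N w j i) (cumB N w j (i + 1)) ⊆ Ico ((j:ℝ)/N) (((j:ℝ)+1)/N) := by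
  apply Set.Ico_subset_Ico
  · rw [← cumB_zero N w j]; exact cumB_mono N w hw j (Nat.zero_le i)
  · rw [← cumB_top N w j (hrow j hj)]; exact cumB_mono N w hw j (by omega)

lemma blocks_disjoint (hN : 0 < N) (hw : ∀ i j, 0 ≤ w i j)
    (hrow : ∀ j, j < N → ∑ i ∈ Finset.range N, w i j = 1 / N) :
    Pairwise (Function.onFun Disjoint fun p : Fin N × Fin N =>
      Ico (cumB N w p.2 p.1) (cumB N w p.2 (p.1 + 1))) := by
  intro p q hpq
  by_cases hj : (p.2 : ℕ) = (q.2 : ℕ)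
  · have hij : (p.1 : ℕ) ≠ (q.1 : ℕ) := by
      intro h
      exact hpq (Prod.ext (Fin.ext h) (Fin.ext hj))
    have := disjoint_Ico_monotone (cumB N w p.2) (cumB_mono N w hw p.2) hij
    rwa [Function.onFun, hj] at *
  · refine Set.disjoint_of_subset
      (block_subset_col N w hN hw hrow p.1.isLt p.2.isLt)
      (block_subset_col N w hN hw hrow q.1.isLt q.2.isLt) ?_
    have h2 : ∀ t : ℕ, ((t:ℝ)+1)/N = ((t+1 : ℕ) : ℝ)/N := by intro t; push_cast; ring
    rw [h2, h2]
    exact disjoint_Ico_monotone _ (div_mono N hN) hj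

lemma blocks_union (hN : 0 < N) (hw : ∀ i j, 0 ≤ w i j)
    (hrow : ∀ j, j < N → ∑ i ∈ Finset.range N, w i j = 1 / N) :
    ⋃ p : Fin N × Fin N, Ico (cumB N w p.2 p.1) (cumB N w p.2 (p.1 + 1))
      = Ico (0:ℝ) 1 := by
  have hcol : ∀ j : ℕ, j < N →
      ⋃ i : Fin N, Ico (cumB N w j i) (cumB N w j ((i:ℕ) + 1))
        = Ico ((j:ℝ)/N) (((j+1:ℕ):ℝ)/N) := by
    intro j hj
    rw [iUnion_fin_eq_range (g := fun t => Ico (cumB N w j t) (cumB N w j (t + 1))),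
      iUnion_Ico_monotone _ (cumB_mono N w hw j) N,
      cumB_zero, cumB_top N w j (hrow j hj)]
    push_cast
    ring_nf
  calc ⋃ p : Fin N × Fin N, Ico (cumB N w p.2 p.1) (cumB N w p.2 (p.1 + 1))
      = ⋃ j : Fin N, ⋃ i : Fin N, Ico (cumB N w j i) (cumB N w j ((i:ℕ) + 1)) := by
        ext x
        simp only [Set.mem_iUnion]
        exact ⟨fun ⟨p, hp⟩ => ⟨p.2, p.1, hp⟩, fun ⟨j, i, h⟩ => ⟨(i, j), h⟩⟩
    _ = ⋃ j : Fin N, Ico (((j:ℕ):ℝ)/N) ((((j:ℕ)+1:ℕ):ℝ)/N) := by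
        refine Set.iUnion_congr fun j => hcol j j.isLt
    _ = Ico (0:ℝ) 1 := by
        rw [iUnion_fin_eq_range (g := fun t => Ico ((t:ℝ)/N) (((t+1:ℕ):ℝ)/N))]
        have : ∀ t : ℕ, Ico ((t:ℝ)/N) (((t+1:ℕ):ℝ)/N)
            = Ico ((fun s : ℕ => (s:ℝ)/N) t) ((fun s : ℕ => (s:ℝ)/N) (t+1)) := by
          intro t; norm_num
        simp_rw [this]
        rw [iUnion_Ico_monotone _ (div_mono N hN) N]
        norm_num
        rw [div_self (by exact_mod_cast hN.ne' : (N:ℝ) ≠ 0)]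

end Blocks

section L2Helpers

lemma coeFn_sum' {ι : Type*} (s : Finset ι) (f : ι → Lp ℝ 2 μ01) :
    ⇑(∑ i ∈ s, f i) =ᵐ[μ01] fun x => ∑ i ∈ s, f i x := by
  classical
  induction s using Finset.induction_on with
  | empty => simp only [Finset.sum_empty]; exact Lp.coeFn_zero ℝ 2 μ01
  | insert a s' hx ih =>
      rw [Finset.sum_insert hx]
      filter_upwards [Lp.coeFn_add (f a) (∑ i ∈ s', f i), ih] with x h1 h2
      simp only [h1, Pi.add_apply, h2, Finset.sum_insert hx]

lemma ae_sum_congr {ι : Type*} (s : Finset ι) {f g : ι → ℝ → ℝ}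
    (h : ∀ i ∈ s, f i =ᵐ[μ01] g i) :
    (fun x => ∑ i ∈ s, f i x) =ᵐ[μ01] fun x => ∑ i ∈ s, g i x := by
  have := (ae_ball_iff s.countable_toSet).mpr h
  filter_upwards [this] with x hx
  exact Finset.sum_congr rfl fun i hi => hx i hi

lemma inner_eq (f g : Lp ℝ 2 μ01) : ⟪f, g⟫ = ∫ x, f x * g x ∂μ01 := by
  rw [MeasureTheory.L2.inner_def]
  congr 1
  funext x
  simp [RCLike.inner_apply, mul_comm]

lemma inner_nonneg' {f g : Lp ℝ 2 μ01} (hf : 0 ≤ f) (hg : 0 ≤ g) : 0 ≤ ⟪f, g⟫ := by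
  rw [inner_eq]
  refine integral_nonneg_of_ae ?_
  filter_upwards [(Lp.coeFn_nonneg f).mpr hf, (Lp.coeFn_nonneg g).mpr hg] with x h1 h2
  exact mul_nonneg h1 h2

lemma indicatorConstLp_nonneg {s : Set ℝ} (hs : MeasurableSet s) (hμs : μ01 s ≠ ⊤) :
    0 ≤ (indicatorConstLp 2 hs hμs (1:ℝ)) := by
  rw [← Lp.coeFn_nonneg]
  filter_upwards [indicatorConstLp_coeFn (p := 2) (hs := hs) (hμs := hμs) (c := (1:ℝ))]
    with x hx
  rw [hx]
  exact Set.indicator_nonneg (fun _ _ => zero_le_one) x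

lemma indicator_Icc_ae_Ico (s t : ℝ) :
    (Set.Icc s t).indicator (fun _ => (1:ℝ)) =ᵐ[μ01] (Set.Ico s t).indicator (fun _ => (1:ℝ)) := by
  have hsub : {x : ℝ | ¬ (Set.Icc s t).indicator (fun _ => (1:ℝ)) x
      = (Set.Ico s t).indicator (fun _ => (1:ℝ)) x} ⊆ {t} := by
    intro x hx
    simp only [Set.mem_setOf_eq] at hx
    by_contra hxt
    apply hx
    have : x ∈ Set.Icc s t ↔ x ∈ Set.Ico s t := by
      simp only [Set.mem_Icc, Set.mem_Ico]
      constructor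
      · rintro ⟨h1, h2⟩
        exact ⟨h1, lt_of_le_of_ne h2 (by simpa using hxt)⟩
      · rintro ⟨h1, h2⟩; exact ⟨h1, le_of_lt h2⟩
    by_cases hmem : x ∈ Set.Icc s t
    · rw [Set.indicator_of_mem hmem, Set.indicator_of_mem (this.mp hmem)]
    · rw [Set.indicator_of_notMem hmem, Set.indicator_of_notMem (fun h => hmem (this.mpr h))]
  have h0 : μ01 {x : ℝ | ¬ (Set.Icc s t).indicator (fun _ => (1:ℝ)) x
      = (Set.Ico s t).indicator (fun _ => (1:ℝ)) x} = 0 := by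
    refine measure_mono_null hsub ?_
    refine le_antisymm (le_trans (Measure.restrict_le_self _) ?_) zero_le
    simp
  exact h0

lemma ae_mem_Ico01 : ∀ᵐ x ∂μ01, x ∈ Set.Ico (0:ℝ) 1 := by
  rw [ae_iff]
  refine le_antisymm (le_trans (le_of_eq (Measure.restrict_apply₀ ?_)) ?_) zero_le
  · exact (measurableSet_Ico.compl).nullMeasurableSet
  · refine le_trans (measure_mono (?_ : _ ⊆ ({1} : Set ℝ)))
      (le_of_eq Real.volume_singleton)
    intro x ⟨hx1, hx2⟩
    simp only [Set.mem_compl_iff, Set.mem_Ico, not_and_or, not_le, not_lt] at hx1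
    rcases hx1 with h | h
    · exact absurd hx2.1 (not_le.mpr h)
    · exact Set.mem_singleton_iff.mpr (le_antisymm hx2.2 h)

end L2Helpers

section Dyadic

open Set

lemma iUnion_IcoN (N : ℕ) (hN : 0 < N) :
    ⋃ j : Fin N, Ico ((j:ℝ)/N) (((j:ℝ)+1)/N) = Ico (0:ℝ) 1 := by
  rw [iUnion_fin_eq_range (g := fun t => Ico ((t:ℝ)/N) (((t:ℝ)+1)/N))]
  have h : ∀ t : ℕ, Ico ((t:ℝ)/N) (((t:ℝ)+1)/N)
      = Ico ((fun s : ℕ => (s:ℝ)/N) t) ((fun s : ℕ => (s:ℝ)/N) (t+1)) := by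
    intro t; push_cast; norm_num
  simp_rw [h]
  rw [iUnion_Ico_monotone _ (div_mono N hN) N]
  norm_num
  rw [div_self (by exact_mod_cast hN.ne' : (N:ℝ) ≠ 0)]

lemma disjoint_IcoN (N : ℕ) (hN : 0 < N) {i j : Fin N} (hij : i ≠ j) :
    Disjoint (Ico ((i:ℝ)/N) (((i:ℝ)+1)/N)) (Ico ((j:ℝ)/N) (((j:ℝ)+1)/N)) := by
  have h : ∀ t : Fin N, Ico ((t:ℝ)/N) (((t:ℝ)+1)/N)
      = Ico ((fun s : ℕ => (s:ℝ)/N) (t:ℕ)) ((fun s : ℕ => (s:ℝ)/N) ((t:ℕ)+1)) := by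
    intro t; push_cast; norm_num
  rw [h i, h j]
  exact disjoint_Ico_monotone _ (div_mono N hN) (fun hc => hij (Fin.ext hc))

lemma dyadInd_coeFn (n : ℕ) (j : Fin (2^n)) :
    ⇑(dyadInd n j) =ᵐ[μ01]
      (Ico ((j:ℝ)/2^n) (((j:ℝ)+1)/2^n)).indicator (fun _ => (1:ℝ)) :=
  (indicatorConstLp_coeFn).trans (indicator_Icc_ae_Ico _ _)

lemma Icc_dyad_subset (n : ℕ) (j : Fin (2^n)) :
    Icc ((j:ℝ)/2^n) (((j:ℝ)+1)/2^n) ⊆ Icc (0:ℝ) 1 := by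
  have h2 : (0:ℝ) < 2^n := by positivity
  apply Icc_subset_Icc
  · positivity
  · rw [div_le_one h2]
    have : (j:ℝ) + 1 ≤ (2^n : ℕ) := by exact_mod_cast j.isLt
    simpa using this

lemma sum_dyadInd (n : ℕ) : ∑ j : Fin (2^n), dyadInd n j = oneL2 := by
  apply Lp.ext
  refine (coeFn_sum' Finset.univ (dyadInd n)).trans ?_
  refine EventuallyEq.trans (ae_sum_congr Finset.univ
    (fun j _ => dyadInd_coeFn n j)) ?_
  refine EventuallyEq.trans ?_ ((indicator_Icc_ae_Ico 0 1).symm.trans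
    indicatorConstLp_coeFn.symm)
  have key : ∀ x : ℝ, ∑ j : Fin (2^n), (Ico ((j:ℝ)/2^n) (((j:ℝ)+1)/2^n)).indicator
      (fun _ => (1:ℝ)) x = (Ico (0:ℝ) 1).indicator (fun _ => (1:ℝ)) x := by
    intro x
    have hN : (0:ℕ) < 2^n := Nat.pow_pos (by norm_num)
    have h : ∀ t : ℕ, (Ico ((t:ℝ)/2^n) (((t:ℝ)+1)/2^n)).indicator (fun _ => (1:ℝ)) x
        = (Ico ((fun s : ℕ => (s:ℝ)/(2^n : ℕ)) t) ((fun s : ℕ => (s:ℝ)/(2^n : ℕ)) (t+1))).indicator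
          (fun _ => (1:ℝ)) x := by
      intro t; push_cast; norm_num
    calc ∑ j : Fin (2^n), (Ico ((j:ℝ)/2^n) (((j:ℝ)+1)/2^n)).indicator (fun _ => (1:ℝ)) x
        = ∑ t ∈ Finset.range (2^n), (Ico ((fun s : ℕ => (s:ℝ)/(2^n:ℕ)) t)
            ((fun s : ℕ => (s:ℝ)/(2^n:ℕ)) (t+1))).indicator (fun _ => (1:ℝ)) x := by
          rw [← Fin.sum_univ_eq_sum_range (fun t => (Ico ((fun s : ℕ => (s:ℝ)/(2^n:ℕ)) t)
            ((fun s : ℕ => (s:ℝ)/(2^n:ℕ)) (t+1))).indicator (fun _ => (1:ℝ)) x)]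
          exact Finset.sum_congr rfl fun j _ => h j
      _ = (Ico ((0:ℝ)/(2^n:ℕ)) (((2^n : ℕ):ℝ)/(2^n:ℕ))).indicator (fun _ => (1:ℝ)) x := by
          rw [sum_indicator_Ico _ (div_mono (2^n) hN) (2^n)]
          norm_num
      _ = (Ico (0:ℝ) 1).indicator (fun _ => (1:ℝ)) x := by
          norm_num
  exact Filter.Eventually.of_forall key

lemma inner_indicatorConstLp_mul {s t : Set ℝ} (hs : MeasurableSet s) (ht : MeasurableSet t)
    (hμs : μ01 s ≠ ⊤) (hμt : μ01 t ≠ ⊤) :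
    ⟪indicatorConstLp 2 hs hμs (1:ℝ), indicatorConstLp 2 ht hμt (1:ℝ)⟫
      = (μ01 (s ∩ t)).toReal := by
  rw [inner_eq]
  have hae : (fun x => (indicatorConstLp 2 hs hμs (1:ℝ)) x * (indicatorConstLp 2 ht hμt (1:ℝ)) x)
      =ᵐ[μ01] (s ∩ t).indicator (fun _ => (1:ℝ)) := by
    filter_upwards [indicatorConstLp_coeFn (p := 2) (hs := hs) (hμs := hμs) (c := (1:ℝ)),
      indicatorConstLp_coeFn (p := 2) (hs := ht) (hμs := hμt) (c := (1:ℝ))] with x h1 h2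
    rw [h1, h2]
    have := congrFun (Set.inter_indicator_one (s := s) (t := t) (M₀ := ℝ)) x
    exact this.symm
  rw [integral_congr_ae hae, integral_indicator_const (1:ℝ) (hs.inter ht)]
  simp
  rfl

lemma mu01_subset_Icc {A : Set ℝ} (hA : MeasurableSet A) (h : A ⊆ Icc 0 1) :
    μ01 A = volume A := by
  rw [Measure.restrict_apply hA, Set.inter_eq_left.mpr h]

end Dyadic

section Level

open Set

lemma col_union (N : ℕ) (w : ℕ → ℕ → ℝ) (hw : ∀ i j, 0 ≤ w i j) {j : ℕ} (hj : j < N)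
    (hrow : ∑ i ∈ Finset.range N, w i j = 1 / N) :
    ⋃ i : Fin N, Ico (cumB N w j i) (cumB N w j ((i:ℕ) + 1))
      = Ico ((j:ℝ)/N) (((j:ℝ)+1)/N) := by
  rw [iUnion_fin_eq_range (g := fun t => Ico (cumB N w j t) (cumB N w j (t + 1))),
    iUnion_Ico_monotone _ (cumB_mono N w hw j) N,
    cumB_zero, cumB_top N w j hrow]

lemma dyadInd_nonneg (n : ℕ) (j : Fin (2^n)) : 0 ≤ dyadInd n j :=
  indicatorConstLp_nonneg _ _

lemma inner_one_dyad (n : ℕ) (j : Fin (2^n)) :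
    ⟪oneL2, dyadInd n j⟫ = 1 / 2^n := by
  rw [oneL2, dyadInd, inner_indicatorConstLp_mul,
    Set.inter_eq_right.mpr (Icc_dyad_subset n j),
    mu01_subset_Icc measurableSet_Icc (Icc_dyad_subset n j), Real.volume_Icc]
  rw [show ((j:ℝ)+1)/2^n - (j:ℝ)/2^n = 1/2^n by ring]
  exact ENNReal.toReal_ofReal (by positivity)

set_option maxHeartbeats 1000000 in
lemma level_exists (P : Lp ℝ 2 μ01 →L[ℝ] Lp ℝ 2 μ01)
    (hpos : ∀ f : Lp ℝ 2 μ01, 0 ≤ f → 0 ≤ P f)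
    (h1 : P oneL2 = oneL2)
    (h1' : ContinuousLinearMap.adjoint P oneL2 = oneL2) (n : ℕ) :
    ∃ (T S : ℝ → ℝ) (K : Lp ℝ 2 μ01 →L[ℝ] Lp ℝ 2 μ01),
      MeasurePreserving T μ01 μ01 ∧ MeasurePreserving S μ01 μ01 ∧
      (∀ x, S (T x) = x) ∧ (∀ x, T (S x) = x) ∧
      (∀ f : Lp ℝ 2 μ01, ⇑(K f) =ᵐ[μ01] ⇑f ∘ T) ∧ (∀ f, ‖K f‖ = ‖f‖) ∧
      (∀ i j : Fin (2^n),
        ⟪K (dyadInd n i), dyadInd n j⟫ = ⟪P (dyadInd n i), dyadInd n j⟫) := by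
  classical
  set N := 2^n with hNdef
  have hN : 0 < N := Nat.pow_pos (by norm_num)
  set m : ℕ → ℕ → ℝ := fun i j =>
    if h : i < N ∧ j < N then ⟪P (dyadInd n ⟨i, h.1⟩), dyadInd n ⟨j, h.2⟩⟫ else 0 with hmdef
  have hm : ∀ i j, 0 ≤ m i j := by
    intro i j
    by_cases h : i < N ∧ j < N
    · have he : m i j = ⟪P (dyadInd n ⟨i, h.1⟩), dyadInd n ⟨j, h.2⟩⟫ := by
        simp only [hmdef]; rw [dif_pos h]
      rw [he]
      exact inner_nonneg' (hpos _ (dyadInd_nonneg n _)) (dyadInd_nonneg n _)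
    · have he : m i j = 0 := by simp only [hmdef]; rw [dif_neg h]
      rw [he]
  have hmfin : ∀ i j : Fin N, m i j = ⟪P (dyadInd n i), dyadInd n j⟫ := by
    intro i j
    simp only [hmdef]
    rw [dif_pos ⟨i.isLt, j.isLt⟩]
  have hcol : ∀ j, j < N → ∑ i ∈ Finset.range N, m i j = 1 / N := by
    intro j hj
    rw [← Fin.sum_univ_eq_sum_range (fun i => m i j) N]
    have hmi : ∀ i : Fin N, m i j = ⟪P (dyadInd n i), dyadInd n ⟨j, hj⟩⟫ := fun i =>
      hmfin i ⟨j, hj⟩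
    calc ∑ i : Fin N, m i j
        = ∑ i : Fin N, ⟪P (dyadInd n i), dyadInd n ⟨j, hj⟩⟫ :=
          Finset.sum_congr rfl fun i _ => hmi i
      _ = ⟪∑ i : Fin N, P (dyadInd n i), dyadInd n ⟨j, hj⟩⟫ := (sum_inner _ _ _).symm
      _ = ⟪P (∑ i : Fin N, dyadInd n i), dyadInd n ⟨j, hj⟩⟫ := by rw [map_sum]
      _ = (1:ℝ) / N := by
          rw [sum_dyadInd, h1, inner_one_dyad]
          push_cast [hNdef]
          ring
  have hrowt : ∀ i, i < N → ∑ j ∈ Finset.range N, m i j = 1 / N := by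
    intro i hi
    rw [← Fin.sum_univ_eq_sum_range (fun j => m i j) N]
    have hmi : ∀ j : Fin N, m i j = ⟪P (dyadInd n ⟨i, hi⟩), dyadInd n j⟫ := fun j =>
      hmfin ⟨i, hi⟩ j
    calc ∑ j : Fin N, m i j
        = ∑ j : Fin N, ⟪P (dyadInd n ⟨i, hi⟩), dyadInd n j⟫ :=
          Finset.sum_congr rfl fun j _ => hmi j
      _ = ⟪P (dyadInd n ⟨i, hi⟩), ∑ j : Fin N, dyadInd n j⟫ := (inner_sum _ _ _).symm
      _ = ⟪P (dyadInd n ⟨i, hi⟩), oneL2⟫ := by rw [sum_dyadInd]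
      _ = ⟪dyadInd n ⟨i, hi⟩, ContinuousLinearMap.adjoint P oneL2⟫ :=
          (ContinuousLinearMap.adjoint_inner_right P _ _).symm
      _ = (1:ℝ) / N := by
          rw [h1', real_inner_comm, inner_one_dyad]
          push_cast [hNdef]
          ring
  set mT : ℕ → ℕ → ℝ := fun i j => m j i with hmTdef
  have hmT : ∀ i j, 0 ≤ mT i j := fun i j => hm j i
  have hmTcol : ∀ j, j < N → ∑ i ∈ Finset.range N, mT i j = 1 / N := fun j hj =>
    hrowt j hj
  set a : Fin N × Fin N → ℝ := fun p => cumB N m p.2 p.1 with hadef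
  set ℓ : Fin N × Fin N → ℝ := fun p => m p.1 p.2 with hldef
  set b : Fin N × Fin N → ℝ := fun p => cumB N mT p.1 p.2 with hbdef
  have hAeq : ∀ p : Fin N × Fin N,
      Ico (a p) (a p + ℓ p) = Ico (cumB N m p.2 p.1) (cumB N m p.2 ((p.1:ℕ) + 1)) := by
    intro p
    rw [hadef, hldef, cumB_succ N m p.1.isLt]
  have hBeq : ∀ p : Fin N × Fin N,
      Ico (b p) (b p + ℓ p) = Ico (cumB N mT p.1 p.2) (cumB N mT p.1 ((p.2:ℕ) + 1)) := by
    intro p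
    rw [hbdef, hldef, cumB_succ N mT p.2.isLt]
  have dA : Pairwise (Function.onFun Disjoint fun p : Fin N × Fin N =>
      Ico (a p) (a p + ℓ p)) := by
    intro p q hpq
    rw [Function.onFun, hAeq p, hAeq q]
    exact blocks_disjoint N m hN hm hcol hpq
  have uA : ⋃ p : Fin N × Fin N, Ico (a p) (a p + ℓ p) = Ico (0:ℝ) 1 := by
    simp_rw [hAeq]
    exact blocks_union N m hN hm hcol
  have dB : Pairwise (Function.onFun Disjoint fun p : Fin N × Fin N =>
      Ico (b p) (b p + ℓ p)) := by
    intro p q hpq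
    rw [Function.onFun, hBeq p, hBeq q]
    have hne : p.swap ≠ q.swap := fun hc => hpq (Prod.swap_injective hc)
    exact blocks_disjoint N mT hN hmT hmTcol hne
  have uB : ⋃ p : Fin N × Fin N, Ico (b p) (b p + ℓ p) = Ico (0:ℝ) 1 := by
    simp_rw [hBeq]
    rw [← blocks_union N mT hN hmT hmTcol]
    ext x
    simp only [Set.mem_iUnion]
    exact ⟨fun ⟨p, hp⟩ => ⟨(p.2, p.1), hp⟩, fun ⟨q, hq⟩ => ⟨(q.2, q.1), hq⟩⟩
  have hNr : ((N:ℕ):ℝ) = (2:ℝ)^n := by push_cast [hNdef]; ring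
  have dyadCo : ∀ k : Fin N, ⇑(dyadInd n k)
      =ᵐ[μ01] (Ico ((k:ℝ)/(N:ℝ)) (((k:ℝ)+1)/(N:ℝ))).indicator (fun _ => (1:ℝ)) := by
    intro k
    have h := dyadInd_coeFn n k
    rwa [← hNr] at h
  set T : ℝ → ℝ := exchT (fun p => b p - a p) (fun p => Ico (a p) (a p + ℓ p)) with hTdef
  set S : ℝ → ℝ := exchT (fun p => a p - b p) (fun p => Ico (b p) (b p + ℓ p)) with hSdef
  have hT : MeasurePreserving T μ01 μ01 := exchT_measurePreserving dA uA dB uB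
  have hS : MeasurePreserving S μ01 μ01 := exchT_measurePreserving dB uB dA uA
  have hST : ∀ x, S (T x) = x := exchT_inverse dA uA dB uB
  have hTS : ∀ x, T (S x) = x := exchT_inverse dB uB dA uA
  refine ⟨T, S, (Lp.compMeasurePreservingₗᵢ ℝ T hT).toContinuousLinearMap,
    hT, hS, hST, hTS, ?_, ?_, ?_⟩
  · exact fun f => Lp.coeFn_compMeasurePreserving f hT
  · exact fun f => (Lp.compMeasurePreservingₗᵢ ℝ T hT).norm_map f
  · intro i j
    rw [← hmfin i j]
    have hKco : ⇑(Lp.compMeasurePreservingₗᵢ ℝ T hT |>.toContinuousLinearMap (dyadInd n i))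
        =ᵐ[μ01] ((Ico ((i:ℝ)/N) (((i:ℝ)+1)/N)).indicator (fun _ => (1:ℝ))) ∘ T := by
      refine (Lp.coeFn_compMeasurePreserving (dyadInd n i) hT).trans ?_
      exact hT.quasiMeasurePreserving.ae_eq (dyadCo i)
    have hset : T ⁻¹' (Ico ((i:ℝ)/N) (((i:ℝ)+1)/N)) ∩ Ico ((j:ℝ)/N) (((j:ℝ)+1)/N)
        = Ico (a (i, j)) (a (i, j) + ℓ (i, j)) := by
      ext x
      constructor
      · rintro ⟨hxi, hxj⟩
        have hxU : x ∈ ⋃ i' : Fin N, Ico (cumB N m j i') (cumB N m j ((i':ℕ) + 1)) := by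
          rw [col_union N m hm j.isLt (hcol j j.isLt)]
          exact hxj
        obtain ⟨i', hxi'⟩ := Set.mem_iUnion.mp hxU
        rw [← hAeq (i', j)] at hxi'
        have hTx : T x ∈ Ico (b (i', j)) (b (i', j) + ℓ (i', j)) := by
          rw [hTdef]
          exact exchT_mem_target dA hxi'
        have hTx2 : T x ∈ Ico ((i':ℝ)/N) (((i':ℝ)+1)/N) := by
          rw [hBeq (i', j)] at hTx
          exact block_subset_col N mT hN hmT hmTcol j.isLt i'.isLt hTx
        have : i' = i := by
          by_contra hne
          exact Set.disjoint_left.mp (disjoint_IcoN N hN hne) hTx2 hxi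
        rwa [← this]
      · intro hx
        have hxj : x ∈ Ico ((j:ℝ)/N) (((j:ℝ)+1)/N) := by
          rw [hAeq (i, j)] at hx
          exact block_subset_col N m hN hm hcol i.isLt j.isLt hx
        have hTx : T x ∈ Ico (b (i, j)) (b (i, j) + ℓ (i, j)) := by
          rw [hTdef]
          exact exchT_mem_target dA hx
        have hTx2 : T x ∈ Ico ((i:ℝ)/N) (((i:ℝ)+1)/N) := by
          rw [hBeq (i, j)] at hTx
          exact block_subset_col N mT hN hmT hmTcol j.isLt i.isLt hTx
        exact ⟨hTx2, hxj⟩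
    rw [inner_eq]
    have hint : (fun x => (Lp.compMeasurePreservingₗᵢ ℝ T hT |>.toContinuousLinearMap
          (dyadInd n i)) x * (dyadInd n j) x)
        =ᵐ[μ01] (Ico (a (i, j)) (a (i, j) + ℓ (i, j))).indicator (fun _ => (1:ℝ)) := by
      filter_upwards [hKco, dyadCo j] with x h1x h2x
      rw [h1x, h2x, ← hset]
      by_cases hxi : T x ∈ Ico ((i:ℝ)/N) (((i:ℝ)+1)/N) <;>
        by_cases hxj : x ∈ Ico ((j:ℝ)/N) (((j:ℝ)+1)/N) <;>
        simp [Function.comp, Set.indicator_of_mem, Set.indicator_of_notMem, hxi, hxj,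
          Set.mem_inter_iff, Set.mem_preimage]
    rw [integral_congr_ae hint, integral_indicator_const (1:ℝ) measurableSet_Ico]
    have hsub : Ico (a (i, j)) (a (i, j) + ℓ (i, j)) ⊆ Icc (0:ℝ) 1 := by
      refine subset_trans ?_ (Set.Ico_subset_Icc_self)
      rw [hAeq (i, j)]
      refine subset_trans (block_subset_col N m hN hm hcol i.isLt j.isLt) ?_
      refine Set.Ico_subset_Ico ?_ ?_
      · positivity
      · have h2 : (0:ℝ) < N := by exact_mod_cast hN
        rw [div_le_one h2]
        have : (j:ℝ) + 1 ≤ (N:ℝ) := by exact_mod_cast j.isLt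
        exact this
    rw [measureReal_def, mu01_subset_Icc measurableSet_Ico hsub, Real.volume_Ico]
    simp only [add_sub_cancel_left, smul_eq_mul, mul_one]
    exact ENNReal.toReal_ofReal (hm i j)
end Level

section Approx

open Set BoundedContinuousFunction

noncomputable def Dn (n : ℕ) (h : ℝ →ᵇ ℝ) : Lp ℝ 2 μ01 :=
  ∑ j : Fin (2^n), h ((j:ℝ)/2^n) • dyadInd n j

lemma Dn_coeFn (n : ℕ) (h : ℝ →ᵇ ℝ) :
    ⇑(Dn n h) =ᵐ[μ01] fun x => ∑ j : Fin (2^n),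
      h ((j:ℝ)/2^n) * (Ico ((j:ℝ)/2^n) (((j:ℝ)+1)/2^n)).indicator (fun _ => (1:ℝ)) x := by
  refine (coeFn_sum' Finset.univ _).trans ?_
  refine ae_sum_congr Finset.univ (fun j _ => ?_)
  filter_upwards [Lp.coeFn_smul (h ((j:ℝ)/2^n)) (dyadInd n j), dyadInd_coeFn n j]
    with x h1 h2
  rw [h1, Pi.smul_apply, h2, smul_eq_mul]

lemma Dn_dist (h : ℝ →ᵇ ℝ) {ε : ℝ} (hε : 0 < ε) :
    ∃ n0 : ℕ, ∀ n ≥ n0, ‖BoundedContinuousFunction.toLp (E := ℝ) 2 μ01 ℝ h - Dn n h‖ ≤ ε := by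
  have hUC : UniformContinuousOn h (Icc (0:ℝ) 1) :=
    IsCompact.uniformContinuousOn_of_continuous isCompact_Icc h.continuous.continuousOn
  obtain ⟨δ, hδ, hδ'⟩ := Metric.uniformContinuousOn_iff.mp hUC ε hε
  obtain ⟨n0, hn0⟩ : ∃ n0 : ℕ, 1/δ < 2^n0 := by
    obtain ⟨n0, hn0⟩ := pow_unbounded_of_one_lt (1/δ) (one_lt_two (α := ℝ))
    exact ⟨n0, hn0⟩
  refine ⟨n0, fun n hn => ?_⟩
  have hpow : (1:ℝ)/2^n < δ := by
    have h1 : (1:ℝ)/δ < 2^n :=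
      lt_of_lt_of_le hn0 (pow_le_pow_right₀ (by norm_num) hn)
    have h2 : (0:ℝ) < 2^n := by positivity
    rw [div_lt_iff₀ h2]
    rw [div_lt_iff₀ hδ] at h1
    linarith
  refine Lp.norm_le_of_ae_bound hε.le ?_ |>.trans ?_
  · filter_upwards [Lp.coeFn_sub (BoundedContinuousFunction.toLp (E := ℝ) 2 μ01 ℝ h) (Dn n h),
      BoundedContinuousFunction.coeFn_toLp 2 μ01 ℝ h, Dn_coeFn n h, ae_mem_Ico01]
      with x hsub htolp hDn hx
    rw [hsub, Pi.sub_apply, htolp, hDn]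
    have hNr : (((2^n : ℕ)):ℝ) = (2:ℝ)^n := by push_cast; ring
    have hxU : x ∈ ⋃ j : Fin (2^n), Ico ((j:ℝ)/((2^n : ℕ):ℝ)) (((j:ℝ)+1)/((2^n:ℕ):ℝ)) := by
      rw [iUnion_IcoN (2^n) (Nat.pow_pos (by norm_num))]
      exact hx
    rw [hNr] at hxU
    obtain ⟨j, hj⟩ := Set.mem_iUnion.mp hxU
    have hsum : ∑ j' : Fin (2^n), h ((j':ℝ)/2^n) *
        (Ico ((j':ℝ)/2^n) (((j':ℝ)+1)/2^n)).indicator (fun _ => (1:ℝ)) x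
        = h ((j:ℝ)/2^n) := by
      rw [Finset.sum_eq_single j]
      · rw [Set.indicator_of_mem hj, mul_one]
      · intro j' _ hj'
        have hd : Disjoint (Ico ((j':ℝ)/((2^n:ℕ):ℝ)) (((j':ℝ)+1)/((2^n:ℕ):ℝ)))
            (Ico ((j:ℝ)/((2^n:ℕ):ℝ)) (((j:ℝ)+1)/((2^n:ℕ):ℝ))) :=
          disjoint_IcoN (2^n) (Nat.pow_pos (by norm_num)) hj'
        rw [hNr] at hd
        rw [Set.indicator_of_notMem (Set.disjoint_right.mp hd hj), mul_zero]
      · intro habs; exact absurd (Finset.mem_univ j) habs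
    rw [hsum]
    have h2 : (0:ℝ) < 2^n := by positivity
    have hxIcc : x ∈ Icc (0:ℝ) 1 := Ico_subset_Icc_self hx
    have hjIcc : (j:ℝ)/2^n ∈ Icc (0:ℝ) 1 := by
      constructor
      · positivity
      · rw [div_le_one h2]
        have : (j:ℝ) + 1 ≤ ((2^n : ℕ):ℝ) := by exact_mod_cast j.isLt
        rw [hNr] at this
        linarith
    have hdist : dist x ((j:ℝ)/2^n) < δ := by
      rw [Real.dist_eq, abs_of_nonneg (by linarith [hj.1] : (0:ℝ) ≤ x - (j:ℝ)/2^n)]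
      have := hj.2
      have hlt : x - (j:ℝ)/2^n < 1/2^n := by
        have : ((j:ℝ)+1)/2^n = (j:ℝ)/2^n + 1/2^n := by ring
        linarith [hj.2]
      linarith
    have := hδ' x hxIcc ((j:ℝ)/2^n) hjIcc hdist
    rw [Real.dist_eq] at this
    exact le_of_lt (by simpa using this)
  · have : measureUnivNNReal μ01 = 1 := by
      simp [measureUnivNNReal, measure_univ]
    rw [this]
    simp

lemma Dn_inner_eq (n : ℕ) (A B : Lp ℝ 2 μ01 →L[ℝ] Lp ℝ 2 μ01)
    (hq : ∀ i j : Fin (2^n), ⟪A (dyadInd n i), dyadInd n j⟫ = ⟪B (dyadInd n i), dyadInd n j⟫)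
    (h h' : ℝ →ᵇ ℝ) :
    ⟪A (Dn n h), Dn n h'⟫ = ⟪B (Dn n h), Dn n h'⟫ := by
  unfold Dn
  simp only [map_sum, _root_.map_smul, sum_inner, inner_sum, real_inner_smul_left,
    real_inner_smul_right]
  simp only [hq]

end Approx


set_option maxHeartbeats 2000000 in
/-- Every bi-stochastic operator on `L²([0,1])` is a weak operator limit of Koopman
operators of invertible Lebesgue-measure-preserving transformations of `[0,1]`. -/
theorem bistochastic_weak_limit_of_invertible_mpts (P : Lp ℝ 2 μ01 →L[ℝ] Lp ℝ 2 μ01)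
    (hpos : ∀ f : Lp ℝ 2 μ01, 0 ≤ f → 0 ≤ P f)
    (h1 : P oneL2 = oneL2)
    (h1' : ContinuousLinearMap.adjoint P oneL2 = oneL2) :
    ∃ (T S : ℕ → ℝ → ℝ) (K : ℕ → (Lp ℝ 2 μ01 →L[ℝ] Lp ℝ 2 μ01)),
      (∀ n, MeasurePreserving (T n) μ01 μ01) ∧
      (∀ n, MeasurePreserving (S n) μ01 μ01) ∧
      (∀ n, ∀ᵐ x ∂μ01, S n (T n x) = x) ∧
      (∀ n, ∀ᵐ x ∂μ01, T n (S n x) = x) ∧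
      (∀ n (f : Lp ℝ 2 μ01), (K n f : ℝ → ℝ) =ᵐ[μ01] (f : ℝ → ℝ) ∘ T n) ∧
      (∀ f g : Lp ℝ 2 μ01,
        Tendsto (fun n => ⟪K n f, g⟫) atTop (𝓝 ⟪P f, g⟫)) := by
  have H := level_exists P hpos h1 h1'
  choose T S K hT hS hST hTS hK hKnorm hKey using H
  refine ⟨T, S, K, hT, hS, fun n => Filter.Eventually.of_forall (hST n),
    fun n => Filter.Eventually.of_forall (hTS n), hK, ?_⟩
  intro f g
  rw [Metric.tendsto_atTop]
  intro ε hε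
  set X : ℝ := (‖P‖ + 1) * (‖f‖ + ‖g‖ + 3) with hX
  have hP0 : (0:ℝ) ≤ ‖P‖ := norm_nonneg _
  have hf0 : (0:ℝ) ≤ ‖f‖ := norm_nonneg _
  have hg0 : (0:ℝ) ≤ ‖g‖ := norm_nonneg _
  have hX0 : 0 < X := by positivity
  set δ : ℝ := min 1 (ε / (4 * X + 1)) with hδdef
  have hδ0 : 0 < δ := lt_min one_pos (by positivity)
  have hδ1 : δ ≤ 1 := min_le_left _ _
  have hδε : δ ≤ ε / (4 * X + 1) := min_le_right _ _
  have hD : DenseRange ⇑(BoundedContinuousFunction.toLp (E := ℝ) 2 μ01 ℝ) :=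
    BoundedContinuousFunction.toLp_denseRange _ _ _ (by norm_num)
  obtain ⟨hf, hhf⟩ := Metric.denseRange_iff.mp hD f δ hδ0
  obtain ⟨hg, hhg⟩ := Metric.denseRange_iff.mp hD g δ hδ0
  obtain ⟨n1, hn1⟩ := Dn_dist hf hδ0
  obtain ⟨n2, hn2⟩ := Dn_dist hg hδ0
  refine ⟨max n1 n2, fun n hn => ?_⟩
  set a := Dn n hf with ha
  set b := Dn n hg with hb
  have hfa : ‖f - a‖ ≤ 2 * δ := by
    have h1 : ‖f - BoundedContinuousFunction.toLp (E := ℝ) 2 μ01 ℝ hf‖ < δ := by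
      rw [← dist_eq_norm]; exact hhf
    have h2 := hn1 n (le_trans (le_max_left _ _) hn)
    have h3 : f - a = (f - BoundedContinuousFunction.toLp (E := ℝ) 2 μ01 ℝ hf)
        + (BoundedContinuousFunction.toLp (E := ℝ) 2 μ01 ℝ hf - a) := by abel
    rw [h3]
    exact (norm_add_le _ _).trans (by linarith)
  have hgb : ‖g - b‖ ≤ 2 * δ := by
    have h1 : ‖g - BoundedContinuousFunction.toLp (E := ℝ) 2 μ01 ℝ hg‖ < δ := by
      rw [← dist_eq_norm]; exact hhg
    have h2 := hn2 n (le_trans (le_max_right _ _) hn)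
    have h3 : g - b = (g - BoundedContinuousFunction.toLp (E := ℝ) 2 μ01 ℝ hg)
        + (BoundedContinuousFunction.toLp (E := ℝ) 2 μ01 ℝ hg - b) := by abel
    rw [h3]
    exact (norm_add_le _ _).trans (by linarith)
  have hanorm : ‖a‖ ≤ ‖f‖ + 2 := by
    have h3 : a = f - (f - a) := by abel
    rw [h3]
    refine (norm_sub_le _ _).trans ?_
    linarith
  have heq : ⟪K n a, b⟫ = ⟪P a, b⟫ := Dn_inner_eq n (K n) P (hKey n) hf hg
  have hsplit : ∀ (A : Lp ℝ 2 μ01 →L[ℝ] Lp ℝ 2 μ01),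
      ⟪A f, g⟫ - ⟪A a, b⟫ = ⟪A (f - a), g⟫ + ⟪A a, g - b⟫ := by
    intro A
    rw [map_sub, inner_sub_left, inner_sub_right]
    ring
  have eK : |⟪K n f, g⟫ - ⟪K n a, b⟫| ≤ 2*δ*‖g‖ + (‖f‖+2)*(2*δ) := by
    rw [hsplit]
    refine (abs_add_le _ _).trans ?_
    have t1 : |⟪K n (f - a), g⟫| ≤ ‖f - a‖ * ‖g‖ := by
      refine (abs_real_inner_le_norm _ _).trans ?_
      rw [hKnorm]
    have t2 : |⟪K n a, g - b⟫| ≤ ‖a‖ * ‖g - b‖ := by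
      refine (abs_real_inner_le_norm _ _).trans ?_
      rw [hKnorm]
    have t3 : ‖f - a‖ * ‖g‖ ≤ 2*δ*‖g‖ := mul_le_mul_of_nonneg_right hfa hg0
    have t4 : ‖a‖ * ‖g - b‖ ≤ (‖f‖+2) * (2*δ) :=
      mul_le_mul hanorm hgb (norm_nonneg _) (by linarith)
    linarith
  have eP : |⟪P f, g⟫ - ⟪P a, b⟫| ≤ ‖P‖ * (2*δ*‖g‖ + (‖f‖+2)*(2*δ)) := by
    rw [hsplit]
    refine (abs_add_le _ _).trans ?_
    have t1 : |⟪P (f - a), g⟫| ≤ ‖P‖ * ‖f - a‖ * ‖g‖ := by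
      refine (abs_real_inner_le_norm _ _).trans ?_
      exact mul_le_mul_of_nonneg_right (P.le_opNorm _) hg0
    have t2 : |⟪P a, g - b⟫| ≤ ‖P‖ * ‖a‖ * ‖g - b‖ := by
      refine (abs_real_inner_le_norm _ _).trans ?_
      exact mul_le_mul_of_nonneg_right (P.le_opNorm _) (norm_nonneg _)
    have t3 : ‖P‖ * ‖f - a‖ * ‖g‖ ≤ ‖P‖ * (2*δ*‖g‖) := by
      rw [mul_assoc]
      exact mul_le_mul_of_nonneg_left (mul_le_mul_of_nonneg_right hfa hg0) hP0
    have t4 : ‖P‖ * ‖a‖ * ‖g - b‖ ≤ ‖P‖ * ((‖f‖+2)*(2*δ)) := by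
      rw [mul_assoc]
      exact mul_le_mul_of_nonneg_left
        (mul_le_mul hanorm hgb (norm_nonneg _) (by linarith)) hP0
    nlinarith
  have htot : dist ⟪K n f, g⟫ ⟪P f, g⟫ ≤ (1 + ‖P‖) * (2*δ*‖g‖ + (‖f‖+2)*(2*δ)) := by
    rw [Real.dist_eq]
    have : ⟪K n f, g⟫ - ⟪P f, g⟫
        = (⟪K n f, g⟫ - ⟪K n a, b⟫) - (⟪P f, g⟫ - ⟪P a, b⟫) := by
      rw [heq]; ring
    rw [this]
    refine (abs_sub _ _).trans ?_
    nlinarith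
  have hYX : (1 + ‖P‖) * (2*δ*‖g‖ + (‖f‖+2)*(2*δ)) ≤ 2*δ*X := by
    rw [hX]
    nlinarith
  have hfin : 2*δ*X < ε := by
    have h4X : (0:ℝ) < 4*X+1 := by linarith
    have h5 : δ * (4*X+1) ≤ ε := (le_div_iff₀ h4X).mp hδε
    nlinarith [hδ0, hX0]
  exact lt_of_le_of_lt (htot.trans hYX) hfin
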